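/- Let $X$ be a compact metric space such that for every $\epsilon > 0$ and every integer $k \ge 0$ there exist families $\mathcal{C}_1, \ldots, \mathcal{C}_{n+k}$ of pairwise disjoint closed subsets of $X$, each set of diameter at most $\epsilon$, such that every point of $X$ is covered by at least $k+1$ elements of $\bigcup_{j=1}^{n+k} \mathcal{C}_j$. Then $\dim(X) < n$. -/

import Mathlib

open Metric Set

/-- Finitely many disjoint pairs of closed sets in a compact metric space admit a common
thickening radius keeping them disjoint. -/
private lemma sep_aux {X : Type*} [MetricSpace X] [CompactSpace X]
    {P : Set (Set X × Set X)} (hP : P.Finite) :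
    (∀ p ∈ P, Disjoint p.1 p.2 ∧ IsClosed p.1 ∧ IsClosed p.2) →
    ∃ r > 0, ∀ p ∈ P, Disjoint (thickening r p.1) (thickening r p.2) := by
  refine Set.Finite.induction_on
    (motive := fun P _ => (∀ p ∈ P, Disjoint p.1 p.2 ∧ IsClosed p.1 ∧ IsClosed p.2) →
      ∃ r > 0, ∀ p ∈ P, Disjoint (thickening r p.1) (thickening r p.2)) P hP
    (fun _ => ⟨1, one_pos, by simp⟩) ?_
  intro a s ha hs ih hyp
  obtain ⟨r, hr, hrd⟩ := ih fun p hp => hyp p (Set.mem_insert_of_mem _ hp)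
  obtain ⟨hdj, hc1, hc2⟩ := hyp a (Set.mem_insert _ _)
  obtain ⟨d, hd, hdd⟩ := hdj.exists_thickenings hc1.isCompact hc2
  refine ⟨min r d, lt_min hr hd, ?_⟩
  rintro p (rfl | hp)
  · exact hdd.mono (thickening_mono (min_le_right _ _) _)
      (thickening_mono (min_le_right _ _) _)
  · exact (hrd p hp).mono (thickening_mono (min_le_left _ _) _)
      (thickening_mono (min_le_left _ _) _)

/-- Lebesgue covering dimension is at most `n`: every open cover admits an open shrinking
(refinement indexed by the same set) of order at most `n + 1`. -/
def covDimLE (Z : Type*) [TopologicalSpace Z] (n : ℕ) : Prop :=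
  ∀ (ι : Type) (U : ι → Set Z), (∀ i, IsOpen (U i)) → (⋃ i, U i) = Set.univ →
    ∃ V : ι → Set Z, (∀ i, IsOpen (V i)) ∧ (∀ i, V i ⊆ U i) ∧ (⋃ i, V i) = Set.univ ∧
      ∀ z : Z, {i | z ∈ V i}.Finite ∧ {i | z ∈ V i}.ncard ≤ n + 1

/-- `dim X < n` (where the empty space has dimension `-1`). -/
def covDimLT (Z : Type*) [TopologicalSpace Z] (q : ℝ) : Prop :=
  IsEmpty Z ∨ ∃ n : ℕ, covDimLE Z n ∧ (n : ℝ) < q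

theorem stmt16 {X : Type*} [MetricSpace X] [CompactSpace X] (n : ℕ)
    (h : ∀ ε : ℝ, 0 < ε → ∀ k : ℕ,
      ∃ C : Fin (n + k) → Set (Set X),
        (∀ j, (C j).Finite) ∧
        (∀ j, ∀ s ∈ C j, IsClosed s ∧ Metric.diam s ≤ ε) ∧
        (∀ j, (C j).Pairwise Disjoint) ∧
        ∀ x : X, k + 1 ≤ {p : Fin (n + k) × Set X | p.2 ∈ C p.1 ∧ x ∈ p.2}.ncard) :
    covDimLT X n := by
  classical
  by_cases hX : IsEmpty X
  · exact Or.inl hX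
  rw [not_isEmpty_iff] at hX
  match n, h with
  | 0, h =>
    exfalso
    obtain ⟨C, _, _, _, hcov⟩ := h 1 one_pos 0
    have h0 := hcov hX.some
    have he : {p : Fin (0 + 0) × Set X | p.2 ∈ C p.1 ∧ hX.some ∈ p.2} = ∅ :=
      Set.eq_empty_iff_forall_notMem.mpr fun p _ => p.1.elim0
    rw [he, Set.ncard_empty] at h0
    omega
  | (m + 1), h =>
    right
    refine ⟨m, ?_, by exact_mod_cast Nat.lt_succ_self m⟩
    intro ι U hUo hUc
    have hneι : Nonempty ι := by
      have hx : hX.some ∈ ⋃ i, U i := hUc ▸ Set.mem_univ _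
      obtain ⟨i, _⟩ := Set.mem_iUnion.mp hx
      exact ⟨i⟩
    obtain ⟨δ, hδ, hleb⟩ := lebesgue_number_lemma_of_metric isCompact_univ hUo
      (by rw [hUc])
    obtain ⟨C, hfin, hcl, hdisj, hcov⟩ := h (δ / 3) (by positivity) 0
    -- a common thickening radius keeping each family disjoint
    have hPfin : {p : Set X × Set X | ∃ j : Fin (m + 1 + 0), p.1 ∈ C j ∧ p.2 ∈ C j ∧ p.1 ≠ p.2}.Finite := by
      refine (((Set.finite_iUnion hfin).prod (Set.finite_iUnion hfin)).subset ?_)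
      rintro ⟨s, t⟩ ⟨j, hs, ht, -⟩
      exact ⟨Set.mem_iUnion.mpr ⟨j, hs⟩, Set.mem_iUnion.mpr ⟨j, ht⟩⟩
    obtain ⟨r0, hr0, hsep⟩ := sep_aux hPfin (by
      rintro ⟨s, t⟩ ⟨j, hs, ht, hst⟩
      exact ⟨hdisj j hs ht hst, (hcl j s hs).1, (hcl j t ht).1⟩)
    set r := min r0 (δ / 3) with hrdef
    have hrpos : 0 < r := lt_min hr0 (by positivity)
    have hrsep : ∀ j : Fin (m + 1 + 0), ∀ s ∈ C j, ∀ t ∈ C j, s ≠ t →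
        Disjoint (thickening r s) (thickening r t) := fun j s hs t ht hst =>
      (hsep (s, t) ⟨j, hs, ht, hst⟩).mono (thickening_mono (min_le_left _ _) _)
        (thickening_mono (min_le_left _ _) _)
    -- each thickened set fits inside some element of the cover
    have hch : ∀ p : Fin (m + 1 + 0) × Set X, p.2 ∈ C p.1 → ∃ i, thickening r p.2 ⊆ U i := by
      rintro ⟨j, s⟩ hs
      rcases s.eq_empty_or_nonempty with rfl | ⟨x0, hx0⟩
      · exact ⟨Classical.arbitrary ι, by simp⟩
      · obtain ⟨i, hi⟩ := hleb x0 (Set.mem_univ _)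
        refine ⟨i, fun y hy => hi ?_⟩
        rw [Metric.mem_thickening_iff] at hy
        obtain ⟨z, hz, hyz⟩ := hy
        have hb : Bornology.IsBounded s := isCompact_univ.isBounded.subset (Set.subset_univ s)
        have hdz : dist z x0 ≤ δ / 3 :=
          (Metric.dist_le_diam_of_mem hb hz hx0).trans (hcl j s hs).2
        have hr3 : r ≤ δ / 3 := min_le_right _ _
        have : dist y x0 < δ := by
          have := dist_triangle y z x0
          linarith
        exact Metric.mem_ball.mpr this
    set f : Fin (m + 1 + 0) × Set X → ι := fun p =>
      if hp : p.2 ∈ C p.1 then (hch p hp).choose else Classical.arbitrary ι with hfdef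
    have hf : ∀ p (hp : p.2 ∈ C p.1), thickening r p.2 ⊆ U (f p) := by
      intro p hp
      simp only [hfdef, dif_pos hp]
      exact (hch p hp).choose_spec
    set V : ι → Set X := fun i =>
      ⋃ (p : Fin (m + 1 + 0) × Set X) (_ : p.2 ∈ C p.1 ∧ f p = i), thickening r p.2 with hVdef
    have hVo : ∀ i, IsOpen (V i) :=
      fun i => isOpen_iUnion fun p => isOpen_iUnion fun _ => isOpen_thickening
    have hVU : ∀ i, V i ⊆ U i := by
      rintro i x hx
      simp only [hVdef, Set.mem_iUnion] at hx
      obtain ⟨p, ⟨hp, hpi⟩, hxp⟩ := hx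
      exact hpi ▸ hf p hp hxp
    refine ⟨V, hVo, hVU, ?_, ?_⟩
    · apply Set.eq_univ_of_forall
      intro x
      have hne' : {p : Fin (m + 1 + 0) × Set X | p.2 ∈ C p.1 ∧ x ∈ p.2}.Nonempty :=
        Set.nonempty_of_ncard_ne_zero (by have := hcov x; omega)
      obtain ⟨p, hp, hxp⟩ := hne'
      refine Set.mem_iUnion.mpr ⟨f p, ?_⟩
      simp only [hVdef, Set.mem_iUnion]
      exact ⟨p, ⟨hp, rfl⟩, self_subset_thickening hrpos _ hxp⟩
    · intro z
      set S : Set (Fin (m + 1 + 0) × Set X) := {p | p.2 ∈ C p.1 ∧ z ∈ thickening r p.2} with hSdef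
      have hSfin : S.Finite := by
        refine ((Set.finite_univ.prod (Set.finite_iUnion hfin)).subset ?_)
        rintro ⟨j, s⟩ ⟨hs, -⟩
        exact ⟨Set.mem_univ _, Set.mem_iUnion.mpr ⟨j, hs⟩⟩
      have hScard : S.ncard ≤ m + 1 := by
        have hinj : Set.InjOn Prod.fst S := by
          rintro ⟨j, s⟩ ⟨hs, hzs⟩ ⟨j', t⟩ ⟨ht, hzt⟩ (hjj : j = j')
          subst hjj
          by_contra hne'
          have hst : s ≠ t := fun he => hne' (by rw [he])
          exact Set.disjoint_left.mp (hrsep j s hs t ht hst) hzs hzt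
        have := Set.ncard_le_ncard_of_injOn Prod.fst
          (fun p _ => Set.mem_univ (α := Fin (m + 1 + 0)) p.1) hinj Set.finite_univ
        rwa [Set.ncard_univ, Nat.card_eq_fintype_card, Fintype.card_fin] at this
      -- map each index containing z to a witnessing pair
      have hkey : ∀ i, z ∈ V i → ∃ p, p ∈ S ∧ f p = i := by
        intro i hi
        simp only [hVdef, Set.mem_iUnion] at hi
        obtain ⟨p, ⟨hp, hpi⟩, hzp⟩ := hi
        exact ⟨p, ⟨hp, hzp⟩, hpi⟩
      have hneP : Nonempty (Fin (m + 1 + 0) × Set X) := ⟨⟨0, ∅⟩⟩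
      set g : ι → Fin (m + 1 + 0) × Set X := fun i =>
        if hi : z ∈ V i then (hkey i hi).choose else Classical.arbitrary _ with hgdef
      have hg : ∀ i ∈ {i | z ∈ V i}, g i ∈ S ∧ f (g i) = i := by
        intro i hi
        simp only [Set.mem_setOf_eq] at hi
        simp only [hgdef, dif_pos hi]
        exact (hkey i hi).choose_spec
      have hginj : Set.InjOn g {i | z ∈ V i} := by
        intro i hi i' hi' he
        rw [← (hg i hi).2, ← (hg i' hi').2, he]
      have hfin' : {i | z ∈ V i}.Finite := by
        refine Set.Finite.of_finite_image (hSfin.subset ?_) hginj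
        rintro q ⟨i, hi, rfl⟩
        exact (hg i hi).1
      exact ⟨hfin', (Set.ncard_le_ncard_of_injOn g (fun i hi => (hg i hi).1)
        hginj hSfin).trans hScard⟩
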